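/- Let f : α → α be a function and define the relation B ≤ C iff there exists n : ℕ with f^[n] B = C. Assume ≤ is antisymmetric. Let P : α → Prop be a predicate and C : α an element such that there exists some D with C ≤ D and P D. Then there exists a unique D : α such that C ≤ D, P D, and for every E with C ≤ E and P E one has D ≤ E. -/
import Mathlib


/-- If the subclass relation `B ≤ C` iff `∃ n, f^[n] B = C` is
antisymmetric, then for a predicate `P` that holds of some ancestor of
`C`, there is a unique ancestor of `C` satisfying `P` that is least with
respect to `≤`. -/
theorem unique_least_ancestor {α : Type*} (f : α → α)
    (hanti : ∀ B C : α, (∃ n : ℕ, f^[n] B = C) → (∃ n : ℕ, f^[n] C = B) → B = C)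
    (P : α → Prop) (C : α)
    (hex : ∃ D : α, (∃ n : ℕ, f^[n] C = D) ∧ P D) :
    ∃! D : α, (∃ n : ℕ, f^[n] C = D) ∧ P D ∧
      ∀ E : α, (∃ n : ℕ, f^[n] C = E) → P E → ∃ n : ℕ, f^[n] D = E := by
  classical
  obtain ⟨D0, ⟨n0, hn0⟩, hPD0⟩ := hex
  have h : ∃ n : ℕ, P (f^[n] C) := ⟨n0, hn0 ▸ hPD0⟩
  set n := Nat.find h with hn
  refine ⟨f^[n] C, ⟨⟨n, rfl⟩, Nat.find_spec h, ?_⟩, ?_⟩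
  · rintro E ⟨m, rfl⟩ hPE
    have hle : n ≤ m := Nat.find_min' h hPE
    exact ⟨m - n, by rw [← Function.iterate_add_apply, Nat.sub_add_cancel hle]⟩
  · rintro D ⟨hCD, hPD, hleast⟩
    exact hanti D _ (hleast _ ⟨n, rfl⟩ (Nat.find_spec h)) (by
      obtain ⟨m, rfl⟩ := hCD
      have hle : n ≤ m := Nat.find_min' h hPD
      exact ⟨m - n, by rw [← Function.iterate_add_apply, Nat.sub_add_cancel hle]⟩)
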